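/- For a function G ∈ C⁶ on an interval [l,r] with uniform grid x_i = l + iκ, for each interior index i there exists θ_i ∈ (x_{i-1}, x_{i+1}) such that (1/12)[G''(x_{i-1}) + 10 G''(x_i) + G''(x_{i+1})] − (κ⁴/240) G⁽⁶⁾(θ_i) = (G(x_{i-1}) − 2G(x_i) + G(x_{i+1}))/κ². -/

import Mathlib

set_option maxHeartbeats 1000000

/-- compact-difference identity with remainder for G ∈ C⁶([l,r]). -/
theorem compact_difference_identity (l r : ℝ) (hlr : l < r) (M : ℕ) (hM : 2 ≤ M)
    (κ : ℝ) (hκ : κ = (r - l) / M) (x : ℕ → ℝ) (hx : ∀ i, x i = l + i * κ)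
    (G : ℝ → ℝ) (hG : ContDiffOn ℝ 6 G (Set.Icc l r)) :
    ∀ i, 1 ≤ i → i ≤ M - 1 → ∃ θ ∈ Set.Ioo (x (i-1)) (x (i+1)),
      (1/12) * (iteratedDerivWithin 2 G (Set.Icc l r) (x (i-1))
          + 10 * iteratedDerivWithin 2 G (Set.Icc l r) (x i)
          + iteratedDerivWithin 2 G (Set.Icc l r) (x (i+1)))
        - κ^4 / 240 * iteratedDerivWithin 6 G (Set.Icc l r) θ
      = (G (x (i-1)) - 2 * G (x i) + G (x (i+1))) / κ^2 := by
  intro i hi1 hi2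
  have hM0 : (0:ℝ) < M := by exact_mod_cast Nat.lt_of_lt_of_le Nat.zero_lt_two hM
  have hκ0 : 0 < κ := by rw [hκ]; exact div_pos (by linarith) hM0
  have hiM : i + 1 ≤ M := by omega
  set c := x i with hc
  have hb : x (i+1) = c + κ := by rw [hc, hx, hx]; push_cast; ring
  have ha : x (i-1) = c - κ := by
    rw [hc, hx, hx, Nat.cast_sub hi1]; push_cast; ring
  have hcl : l + κ ≤ c := by
    rw [hc, hx]
    have h1 : (1:ℝ) ≤ (i:ℝ) := by exact_mod_cast hi1
    nlinarith
  have hcr : c + κ ≤ r := by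
    rw [hc, hx]
    have h1 : ((i:ℝ) + 1) ≤ (M:ℝ) := by exact_mod_cast hiM
    have h2 := mul_le_mul_of_nonneg_right h1 hκ0.le
    have h3 : (M:ℝ) * κ = r - l := by rw [hκ]; field_simp
    nlinarith
  have hud : UniqueDiffOn ℝ (Set.Icc l r) := uniqueDiffOn_Icc hlr
  set g : ℕ → ℝ → ℝ := fun k => iteratedDerivWithin k G (Set.Icc l r) with hg
  have hg0 : g 0 = G := by rw [hg]; exact iteratedDerivWithin_zero
  have hgc : ∀ k : ℕ, k ≤ 6 → ContinuousOn (g k) (Set.Icc l r) := by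
    intro k hk
    exact hG.continuousOn_iteratedDerivWithin (by exact_mod_cast hk) hud
  have hgd : ∀ k : ℕ, k ≤ 5 → ∀ y ∈ Set.Ioo l r, HasDerivAt (g k) (g (k+1) y) y := by
    intro k hk y hy
    have hys : y ∈ Set.Icc l r := ⟨hy.1.le, hy.2.le⟩
    have hdo : DifferentiableOn ℝ (g k) (Set.Icc l r) :=
      hG.differentiableOn_iteratedDerivWithin (by exact_mod_cast Nat.lt_succ_of_le hk) hud
    have hdw : HasDerivWithinAt (g k) (g (k+1) y) (Set.Icc l r) y := by
      have h1 := (hdo y hys).hasDerivWithinAt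
      rwa [show g (k+1) y = derivWithin (g k) (Set.Icc l r) y from
        congrFun iteratedDerivWithin_succ y]
    exact hdw.hasDerivAt (Icc_mem_nhds (by linarith [hy.1]) (by linarith [hy.2]))
  have hmemp : ∀ t ∈ Set.Ioo (0:ℝ) κ, c + t ∈ Set.Ioo l r := by
    intro t ht
    exact ⟨by linarith [ht.1], by linarith [ht.2]⟩
  have hmemm : ∀ t ∈ Set.Ioo (0:ℝ) κ, c - t ∈ Set.Ioo l r := by
    intro t ht
    exact ⟨by linarith [ht.2], by linarith [ht.1]⟩
  have hdp : ∀ k : ℕ, k ≤ 5 → ∀ t ∈ Set.Ioo (0:ℝ) κ,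
      HasDerivAt (fun u => g k (c + u)) (g (k+1) (c+t)) t := by
    intro k hk t ht
    have h1 := (hgd k hk (c+t) (hmemp t ht)).comp t ((hasDerivAt_id' (x := t)).const_add c)
    simpa [Function.comp_def] using h1
  have hdm : ∀ k : ℕ, k ≤ 5 → ∀ t ∈ Set.Ioo (0:ℝ) κ,
      HasDerivAt (fun u => g k (c - u)) (-(g (k+1) (c-t))) t := by
    intro k hk t ht
    have h1 := (hgd k hk (c-t) (hmemm t ht)).comp t ((hasDerivAt_id' (x := t)).const_sub c)
    simpa [Function.comp_def] using h1
  have hmapsp : Set.MapsTo (fun u => c + u) (Set.Icc 0 κ) (Set.Icc l r) := by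
    intro t ht
    simp only [Set.mem_Icc] at *
    exact ⟨by linarith [ht.1], by linarith [ht.2]⟩
  have hmapsm : Set.MapsTo (fun u => c - u) (Set.Icc 0 κ) (Set.Icc l r) := by
    intro t ht
    simp only [Set.mem_Icc] at *
    exact ⟨by linarith [ht.2], by linarith [ht.1]⟩
  have hcp : ∀ k : ℕ, k ≤ 6 → ContinuousOn (fun u => g k (c + u)) (Set.Icc 0 κ) :=
    fun k hk => (hgc k hk).comp (continuous_const.add continuous_id).continuousOn hmapsp
  have hcm : ∀ k : ℕ, k ≤ 6 → ContinuousOn (fun u => g k (c - u)) (Set.Icc 0 κ) :=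
    fun k hk => (hgc k hk).comp (continuous_const.sub continuous_id).continuousOn hmapsm
  have hGp : ContinuousOn (fun u => G (c + u)) (Set.Icc 0 κ) :=
    hG.continuousOn.comp (continuous_const.add continuous_id).continuousOn hmapsp
  have hGm : ContinuousOn (fun u => G (c - u)) (Set.Icc 0 κ) :=
    hG.continuousOn.comp (continuous_const.sub continuous_id).continuousOn hmapsm
  set C : ℝ := ((1/12) * (g 2 (c-κ) + 10 * g 2 c + g 2 (c+κ))
      - (G (c-κ) - 2*G c + G (c+κ))/κ^2) / κ^4 with hC
  set F0 : ℝ → ℝ := fun t => G (c+t) + G (c-t) - 2*G c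
      - t^2/12 * (g 2 (c+t) + g 2 (c-t)) - 10/12*(t^2*(g 2 c)) + C*t^6 with hF0
  set F1 : ℝ → ℝ := fun t => g 1 (c+t) - g 1 (c-t) - t/6*(g 2 (c+t) + g 2 (c-t))
      - t^2/12*(g 3 (c+t) - g 3 (c-t)) - 5/3*(t*(g 2 c)) + 6*C*t^5 with hF1
  set F2 : ℝ → ℝ := fun t => 5/6*(g 2 (c+t) + g 2 (c-t)) - t/3*(g 3 (c+t) - g 3 (c-t))
      - t^2/12*(g 4 (c+t) + g 4 (c-t)) - 5/3*(g 2 c) + 30*C*t^4 with hF2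
  set F3 : ℝ → ℝ := fun t => 1/2*(g 3 (c+t) - g 3 (c-t)) - t/2*(g 4 (c+t) + g 4 (c-t))
      - t^2/12*(g 5 (c+t) - g 5 (c-t)) + 120*C*t^3 with hF3
  set F4 : ℝ → ℝ := fun t => -(2*t/3)*(g 5 (c+t) - g 5 (c-t))
      - t^2/12*(g 6 (c+t) + g 6 (c-t)) + 360*C*t^2 with hF4
  -- derivatives
  have hD0 : ∀ t ∈ Set.Ioo (0:ℝ) κ, HasDerivAt F0 (F1 t) t := by
    intro t ht
    have h1 := hdp 0 (by norm_num) t ht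
    have h2 := hdm 0 (by norm_num) t ht
    rw [hg0] at h1 h2
    have H := ((((h1.add h2).sub_const (2*G c)).sub
        (((hasDerivAt_pow 2 t).div_const 12).mul
          ((hdp 2 (by norm_num) t ht).add (hdm 2 (by norm_num) t ht)))).sub
        (((hasDerivAt_pow 2 t).mul_const (g 2 c)).const_mul (10/12))).add
        ((hasDerivAt_pow 6 t).const_mul C)
    exact H.congr_deriv (by rw [hF1]; push_cast [Pi.add_apply, Pi.sub_apply]; ring)
  have hD1 : ∀ t ∈ Set.Ioo (0:ℝ) κ, HasDerivAt F1 (F2 t) t := by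
    intro t ht
    have H := (((((hdp 1 (by norm_num) t ht).sub (hdm 1 (by norm_num) t ht)).sub
        (((hasDerivAt_id' (x := t)).div_const 6).mul
          ((hdp 2 (by norm_num) t ht).add (hdm 2 (by norm_num) t ht)))).sub
        (((hasDerivAt_pow 2 t).div_const 12).mul
          ((hdp 3 (by norm_num) t ht).sub (hdm 3 (by norm_num) t ht)))).sub
        (((hasDerivAt_id' (x := t)).mul_const (g 2 c)).const_mul (5/3))).add
        ((hasDerivAt_pow 5 t).const_mul (6*C))
    exact H.congr_deriv (by rw [hF2]; push_cast [Pi.add_apply, Pi.sub_apply]; ring)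
  have hD2 : ∀ t ∈ Set.Ioo (0:ℝ) κ, HasDerivAt F2 (F3 t) t := by
    intro t ht
    have H := ((((((hdp 2 (by norm_num) t ht).add (hdm 2 (by norm_num) t ht)).const_mul
          (5/6)).sub
        (((hasDerivAt_id' (x := t)).div_const 3).mul
          ((hdp 3 (by norm_num) t ht).sub (hdm 3 (by norm_num) t ht)))).sub
        (((hasDerivAt_pow 2 t).div_const 12).mul
          ((hdp 4 (by norm_num) t ht).add (hdm 4 (by norm_num) t ht)))).sub_const
          (5/3*(g 2 c))).add ((hasDerivAt_pow 4 t).const_mul (30*C))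
    exact H.congr_deriv (by rw [hF3]; push_cast [Pi.add_apply, Pi.sub_apply]; ring)
  have hD3 : ∀ t ∈ Set.Ioo (0:ℝ) κ, HasDerivAt F3 (F4 t) t := by
    intro t ht
    have H := ((((((hdp 3 (by norm_num) t ht).sub (hdm 3 (by norm_num) t ht)).const_mul
          (1/2)).sub
        (((hasDerivAt_id' (x := t)).div_const 2).mul
          ((hdp 4 (by norm_num) t ht).add (hdm 4 (by norm_num) t ht)))).sub
        (((hasDerivAt_pow 2 t).div_const 12).mul
          ((hdp 5 (by norm_num) t ht).sub (hdm 5 (by norm_num) t ht)))).add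
        ((hasDerivAt_pow 3 t).const_mul (120*C)))
    exact H.congr_deriv (by rw [hF4]; push_cast [Pi.add_apply, Pi.sub_apply]; ring)
  -- continuity
  have hcF0 : ContinuousOn F0 (Set.Icc 0 κ) := by
    rw [hF0]
    have A1 := (hGp.add hGm).sub (continuousOn_const (c := 2*G c))
    have A2 := A1.sub ((((continuous_pow 2).div_const 12).continuousOn).mul
      ((hcp 2 (by norm_num)).add (hcm 2 (by norm_num))))
    have A3 := A2.sub (Continuous.continuousOn (s := Set.Icc 0 κ)
      (by fun_prop : Continuous fun t : ℝ => 10/12*(t^2*(g 2 c))))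
    exact A3.add (Continuous.continuousOn
      (by fun_prop : Continuous fun t : ℝ => C*t^6))
  have hcF1 : ContinuousOn F1 (Set.Icc 0 κ) := by
    rw [hF1]
    have A1 := (hcp 1 (by norm_num)).sub (hcm 1 (by norm_num))
    have A2 := A1.sub (((continuous_id.div_const 6).continuousOn).mul
      ((hcp 2 (by norm_num)).add (hcm 2 (by norm_num))))
    have A3 := A2.sub ((((continuous_pow 2).div_const 12).continuousOn).mul
      ((hcp 3 (by norm_num)).sub (hcm 3 (by norm_num))))
    have A4 := A3.sub (Continuous.continuousOn (s := Set.Icc 0 κ)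
      (by fun_prop : Continuous fun t : ℝ => 5/3*(t*(g 2 c))))
    exact A4.add (Continuous.continuousOn
      (by fun_prop : Continuous fun t : ℝ => 6*C*t^5))
  have hcF2 : ContinuousOn F2 (Set.Icc 0 κ) := by
    rw [hF2]
    have A1 := continuousOn_const (c := (5:ℝ)/6) |>.mul
      ((hcp 2 (by norm_num)).add (hcm 2 (by norm_num)))
    have A2 := A1.sub (((continuous_id.div_const 3).continuousOn).mul
      ((hcp 3 (by norm_num)).sub (hcm 3 (by norm_num))))
    have A3 := A2.sub ((((continuous_pow 2).div_const 12).continuousOn).mul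
      ((hcp 4 (by norm_num)).add (hcm 4 (by norm_num))))
    have A4 := A3.sub (continuousOn_const (c := 5/3*(g 2 c)))
    exact A4.add (Continuous.continuousOn
      (by fun_prop : Continuous fun t : ℝ => 30*C*t^4))
  have hcF3 : ContinuousOn F3 (Set.Icc 0 κ) := by
    rw [hF3]
    have A1 := continuousOn_const (c := (1:ℝ)/2) |>.mul
      ((hcp 3 (by norm_num)).sub (hcm 3 (by norm_num)))
    have A2 := A1.sub (((continuous_id.div_const 2).continuousOn).mul
      ((hcp 4 (by norm_num)).add (hcm 4 (by norm_num))))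
    have A3 := A2.sub ((((continuous_pow 2).div_const 12).continuousOn).mul
      ((hcp 5 (by norm_num)).sub (hcm 5 (by norm_num))))
    exact A3.add (Continuous.continuousOn
      (by fun_prop : Continuous fun t : ℝ => 120*C*t^3))
  -- Rolle chain
  have hF00 : F0 0 = F0 κ := by
    have h1 : F0 0 = 0 := by rw [hF0]; norm_num; ring
    have h2 : F0 κ = 0 := by
      rw [hF0, hC]
      field_simp
      ring
    rw [h1, h2]
  obtain ⟨t1, ht1, hFt1⟩ := exists_hasDerivAt_eq_zero hκ0 hcF0 hF00 hD0
  have hF10 : F1 0 = F1 t1 := by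
    rw [hFt1, hF1]; norm_num
  obtain ⟨t2, ht2, hFt2⟩ := exists_hasDerivAt_eq_zero ht1.1
    (hcF1.mono (Set.Icc_subset_Icc_right ht1.2.le)) hF10
    (fun u hu => hD1 u ⟨hu.1, hu.2.trans ht1.2⟩)
  have hF20 : F2 0 = F2 t2 := by
    rw [hFt2, hF2]; norm_num; ring
  obtain ⟨t3, ht3, hFt3⟩ := exists_hasDerivAt_eq_zero ht2.1
    (hcF2.mono (Set.Icc_subset_Icc_right (ht2.2.trans ht1.2).le)) hF20
    (fun u hu => hD2 u ⟨hu.1, (hu.2.trans ht2.2).trans ht1.2⟩)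
  have hF30 : F3 0 = F3 t3 := by
    rw [hFt3, hF3]; norm_num
  have ht3κ : t3 < κ := (ht3.2.trans ht2.2).trans ht1.2
  obtain ⟨t4, ht4, hFt4⟩ := exists_hasDerivAt_eq_zero ht3.1
    (hcF3.mono (Set.Icc_subset_Icc_right ht3κ.le)) hF30
    (fun u hu => hD3 u ⟨hu.1, hu.2.trans ht3κ⟩)
  have ht40 : 0 < t4 := ht4.1
  have ht4κ : t4 < κ := ht4.2.trans ht3κ
  -- mean value theorem on g 5
  have hlt : c - t4 < c + t4 := by linarith
  have hsubIcc : Set.Icc (c - t4) (c + t4) ⊆ Set.Icc l r :=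
    Set.Icc_subset_Icc (by linarith) (by linarith)
  obtain ⟨ζ, hζ, hζeq⟩ := exists_hasDerivAt_eq_slope (g 5) (g 6) hlt
    ((hgc 5 (by norm_num)).mono hsubIcc)
    (fun y hy => hgd 5 le_rfl y ⟨by linarith [hy.1], by linarith [hy.2]⟩)
  have hsub : g 5 (c + t4) - g 5 (c - t4) = 2*t4*(g 6 ζ) := by
    rw [hζeq]
    field_simp
    field_simp [ht40.ne']
    ring
  have h4 : F4 t4 = 0 := hFt4
  rw [hF4] at h4
  have hfac : t4^2*(360*C - 4/3*(g 6 ζ) - 1/12*(g 6 (c+t4) + g 6 (c-t4))) = 0 := by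
    linear_combination h4 + (2*t4/3)*hsub
  have hkey : 240*C = 8/9*(g 6 ζ) + 1/18*(g 6 (c+t4)) + 1/18*(g 6 (c-t4)) := by
    have h0 : 360*C - 4/3*(g 6 ζ) - 1/12*(g 6 (c+t4) + g 6 (c-t4)) = 0 := by
      rcases mul_eq_zero.1 hfac with h | h
      · exact absurd h (by positivity)
      · exact h
    linarith
  -- intermediate value theorem, twice
  have hmmem : (g 6 (c+t4) + g 6 (c-t4))/2 ∈ Set.uIcc (g 6 (c+t4)) (g 6 (c-t4)) := by
    rw [Set.mem_uIcc]
    rcases le_total (g 6 (c+t4)) (g 6 (c-t4)) with h | h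
    · left; constructor <;> linarith
    · right; constructor <;> linarith
  have hu1 : Set.uIcc (c+t4) (c-t4) = Set.Icc (c-t4) (c+t4) := Set.uIcc_of_ge (by linarith)
  obtain ⟨p, hp, hpeq⟩ := intermediate_value_uIcc
    (show ContinuousOn (g 6) (Set.uIcc (c+t4) (c-t4)) by
      rw [hu1]; exact (hgc 6 le_rfl).mono hsubIcc) hmmem
  rw [hu1] at hp
  have h240mem : 240*C ∈ Set.uIcc (g 6 ζ) (g 6 p) := by
    rw [Set.mem_uIcc, hpeq]
    rcases le_total (g 6 ζ) ((g 6 (c+t4) + g 6 (c-t4))/2) with h | h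
    · left; constructor <;> linarith
    · right; constructor <;> linarith
  have hζIcc : ζ ∈ Set.Icc (c-t4) (c+t4) := ⟨hζ.1.le, hζ.2.le⟩
  have hsubu : Set.uIcc ζ p ⊆ Set.Icc (c-t4) (c+t4) := Set.uIcc_subset_Icc hζIcc hp
  obtain ⟨θ, hθ, hθeq⟩ := intermediate_value_uIcc
    ((hgc 6 le_rfl).mono (hsubu.trans hsubIcc)) h240mem
  have hθIcc : θ ∈ Set.Icc (c-t4) (c+t4) := hsubu hθ
  refine ⟨θ, ?_, ?_⟩
  · rw [ha, hb]
    exact ⟨by linarith [hθIcc.1], by linarith [hθIcc.2]⟩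
  · rw [ha, hb]
    have hθval : iteratedDerivWithin 6 G (Set.Icc l r) θ = 240*C := by
      have := hθeq
      rw [hg] at this
      exact this
    rw [hθval, hC]
    simp only [hg]
    field_simp
    ring
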